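/- In the Artin group A(3,3,3) = ⟨s, t, r | sts = tst, trt = rtr, srs = rsr⟩, for every nonzero integer k, the subgroup generated by the two elements str and t^k s r^{-k} s^{-1} is isomorphic to the fundamental group of the Klein bottle, i.e., to the presented group ⟨a, b | a b a^{-1} = b^{-1}⟩. -/

import Mathlib

namespace A333

/-- The defining relations of the Artin group
`A(3,3,3) = ⟨s, t, r | sts = tst, trt = rtr, srs = rsr⟩`,
with `0, 1, 2` playing the roles of `s, t, r`. -/
def rels : Set (FreeGroup (Fin 3)) :=
  { FreeGroup.of 0 * FreeGroup.of 1 * FreeGroup.of 0 *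
      (FreeGroup.of 1 * FreeGroup.of 0 * FreeGroup.of 1)⁻¹,
    FreeGroup.of 1 * FreeGroup.of 2 * FreeGroup.of 1 *
      (FreeGroup.of 2 * FreeGroup.of 1 * FreeGroup.of 2)⁻¹,
    FreeGroup.of 0 * FreeGroup.of 2 * FreeGroup.of 0 *
      (FreeGroup.of 2 * FreeGroup.of 0 * FreeGroup.of 2)⁻¹ }

/-- The Artin group `A(3,3,3)`. -/
abbrev Grp := PresentedGroup rels

def s : Grp := PresentedGroup.of 0
def t : Grp := PresentedGroup.of 1
def r : Grp := PresentedGroup.of 2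

end A333

/-- The Klein bottle group `⟨a, b | a b a⁻¹ = b⁻¹⟩`,
with `false` playing the role of `a` and `true` the role of `b`. -/
abbrev KleinBottleGroup : Type :=
  PresentedGroup ({FreeGroup.of false * FreeGroup.of true *
    (FreeGroup.of false)⁻¹ * FreeGroup.of true} : Set (FreeGroup Bool))

/-! ### Auxiliary material -/

namespace A333KB

/-! #### SL(2,ℤ) preliminaries -/

abbrev SL2 := Matrix.SpecialLinearGroup (Fin 2) ℤ

def Sm (m : ℤ) : SL2 := ⟨!![1, m; 0, 1], by simp [Matrix.det_fin_two_of]⟩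
def Tm (m : ℤ) : SL2 := ⟨!![1, 0; -m, 1], by simp [Matrix.det_fin_two_of]⟩

lemma Sm_mul (a b : ℤ) : Sm a * Sm b = Sm (a + b) := by
  apply Subtype.ext
  rw [Matrix.SpecialLinearGroup.coe_mul]
  simp [Sm, Matrix.SpecialLinearGroup.coe_mul, Matrix.mul_fin_two]
  ring_nf

lemma Tm_mul (a b : ℤ) : Tm a * Tm b = Tm (a + b) := by
  apply Subtype.ext
  rw [Matrix.SpecialLinearGroup.coe_mul]
  simp [Tm, Matrix.SpecialLinearGroup.coe_mul, Matrix.mul_fin_two]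
  ring_nf

lemma Sm_zero : Sm 0 = 1 := by
  apply Subtype.ext
  simp [Sm, Matrix.one_fin_two]

lemma Tm_zero : Tm 0 = 1 := by
  apply Subtype.ext
  simp [Tm, Matrix.one_fin_two]

lemma Sm_inv (a : ℤ) : (Sm a)⁻¹ = Sm (-a) :=
  inv_eq_of_mul_eq_one_right (by rw [Sm_mul, add_neg_cancel]; exact Sm_zero)

lemma Tm_inv (a : ℤ) : (Tm a)⁻¹ = Tm (-a) :=
  inv_eq_of_mul_eq_one_right (by rw [Tm_mul, add_neg_cancel]; exact Tm_zero)

lemma Sm_zpow (m : ℤ) : Sm 1 ^ m = Sm m := by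
  induction m using Int.induction_on with
  | zero => simpa using Sm_zero.symm
  | succ n ih => rw [zpow_add, zpow_one, ih, Sm_mul]
  | pred n ih =>
    rw [sub_eq_add_neg, zpow_add, ih, zpow_neg, zpow_one, Sm_inv, Sm_mul]

lemma Tm_zpow (m : ℤ) : Tm 1 ^ m = Tm m := by
  induction m using Int.induction_on with
  | zero => simpa using Tm_zero.symm
  | succ n ih => rw [zpow_add, zpow_one, ih, Tm_mul]
  | pred n ih =>
    rw [sub_eq_add_neg, zpow_add, ih, zpow_neg, zpow_one, Tm_inv, Tm_mul]

lemma braidST : Sm 1 * Tm 1 * Sm 1 = Tm 1 * Sm 1 * Tm 1 := by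
  apply Subtype.ext
  rw [Matrix.SpecialLinearGroup.coe_mul, Matrix.SpecialLinearGroup.coe_mul, Matrix.SpecialLinearGroup.coe_mul, Matrix.SpecialLinearGroup.coe_mul]
  simp [Sm, Tm, Matrix.SpecialLinearGroup.coe_mul, Matrix.mul_fin_two]

/-! #### The matrix `!![1, -k; -k, k² + 1]` has infinite order -/

def Mk (k : ℤ) : Matrix (Fin 2) (Fin 2) ℤ := !![1, -k; -k, k^2+1]

lemma Mk_inv_lemma (k : ℤ) (hk : k ≠ 0) (n : ℕ) :
    ∃ a b c d : ℤ, Mk k ^ (n+1) = !![a,b;c,d] ∧ 1 ≤ a ∧ 1 ≤ d ∧ k*b ≤ -k^2 ∧ k*c ≤ -k^2 := by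
  have hk2 : 1 ≤ k^2 := by rcases lt_or_gt_of_ne hk with h | h <;> nlinarith
  induction n with
  | zero =>
    exact ⟨1, -k, -k, k^2+1, by rw [pow_one]; rfl, le_refl _, by nlinarith, by nlinarith,
      by nlinarith⟩
  | succ n ih =>
    obtain ⟨a, b, c, d, hM, ha, hd, hb, hc⟩ := ih
    refine ⟨a + b*(-k), a*(-k) + b*(k^2+1), c + d*(-k), c*(-k) + d*(k^2+1), ?_,
      by nlinarith, by nlinarith, by nlinarith, by nlinarith⟩
    rw [pow_succ, hM, Mk, Matrix.mul_fin_two]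
    ring_nf

lemma Mk_pow_ne_one (k : ℤ) (hk : k ≠ 0) (n : ℕ) : Mk k ^ (n+1) ≠ 1 := by
  intro h
  obtain ⟨a, b, c, d, hM, ha, hd, hb, hc⟩ := Mk_inv_lemma k hk n
  rw [h] at hM
  have hb0 : b = 0 := by
    have := congrFun (congrFun hM 0) 1
    simpa [Matrix.one_fin_two] using this.symm
  have hk2 : 1 ≤ k^2 := by rcases lt_or_gt_of_ne hk with h | h <;> nlinarith
  rw [hb0] at hb
  nlinarith

/-- The element `Tm k * Sm (-k)` of `SL(2,ℤ)` has infinite order. -/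
lemma TS_zpow_eq_one (k : ℤ) (hk : k ≠ 0) (n : ℤ) (h : (Tm k * Sm (-k)) ^ n = 1) : n = 0 := by
  by_contra hn
  set u : SL2 := Tm k * Sm (-k) with hu
  have hnat : u ^ (n.natAbs : ℤ) = 1 := by
    rcases Int.natAbs_eq n with he | he
    · rw [← he, h]
    · rw [show (n.natAbs : ℤ) = -n by omega, zpow_neg, h, inv_one]
  rw [zpow_natCast] at hnat
  obtain ⟨j, hj⟩ := Nat.exists_eq_succ_of_ne_zero (Int.natAbs_ne_zero.mpr hn)
  rw [hj] at hnat
  have hcoe : ((u : SL2) : Matrix (Fin 2) (Fin 2) ℤ) = Mk k := by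
    rw [hu, Matrix.SpecialLinearGroup.coe_mul]
    show (!![1, 0; -k, 1] : Matrix (Fin 2) (Fin 2) ℤ) * !![1, -k; 0, 1] = Mk k
    rw [Matrix.mul_fin_two, Mk]
    ring_nf
  apply Mk_pow_ne_one k hk j
  calc Mk k ^ (j+1) = ((u ^ (j+1) : SL2) : Matrix (Fin 2) (Fin 2) ℤ) := by
        rw [Matrix.SpecialLinearGroup.coe_pow, hcoe]
    _ = 1 := by rw [hnat]; rfl

/-! #### Relations in the Artin group -/

open A333

lemma mk_rel_eq_one {α : Type*} {rels : Set (FreeGroup α)} {w : FreeGroup α} (h : w ∈ rels) :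
    PresentedGroup.mk rels w = 1 :=
  (QuotientGroup.eq_one_iff _).mpr (Subgroup.subset_normalClosure h)

lemma hst : s * t * s = t * s * t := by
  have h := mk_rel_eq_one (rels := rels) (Set.mem_insert _ _)
  simp only [map_mul, map_inv] at h
  exact mul_inv_eq_one.mp h

lemma htr : t * r * t = r * t * r := by
  have h := mk_rel_eq_one (rels := rels)
    (Set.mem_insert_of_mem _ (Set.mem_insert _ _))
  simp only [map_mul, map_inv] at h
  exact mul_inv_eq_one.mp h

lemma hsr : s * r * s = r * s * r := by
  have h := mk_rel_eq_one (rels := rels)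
    (Set.mem_insert_of_mem _ (Set.mem_insert_of_mem _ rfl))
  simp only [map_mul, map_inv] at h
  exact mul_inv_eq_one.mp h

lemma braid_conj {G : Type*} [Group G] {a b : G} (h : a * b * a = b * a * b) :
    a * b * a⁻¹ = b⁻¹ * a * b := by
  calc a * b * a⁻¹ = b⁻¹ * (b * a * b) * a⁻¹ := by group
    _ = b⁻¹ * (a * b * a) * a⁻¹ := by rw [h]
    _ = b⁻¹ * a * b := by group

lemma braid_conj_zpow {G : Type*} [Group G] {a b : G} (h : a * b * a = b * a * b) (m : ℤ) :
    a * b ^ m * a⁻¹ = b⁻¹ * a ^ m * b := by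
  calc a * b ^ m * a⁻¹ = (a * b * a⁻¹) ^ m := conj_zpow.symm
    _ = (b⁻¹ * a * b) ^ m := by rw [braid_conj h]
    _ = (b⁻¹ * a * (b⁻¹)⁻¹) ^ m := by rw [inv_inv]
    _ = b⁻¹ * a ^ m * (b⁻¹)⁻¹ := conj_zpow
    _ = b⁻¹ * a ^ m * b := by rw [inv_inv]

/-- The key relation: `str` conjugates `tᵏ s r⁻ᵏ s⁻¹` to its inverse. -/
lemma key_rel (k : ℤ) :
    (s * t * r) * (t ^ k * s * r ^ (-k) * s⁻¹) * (s * t * r)⁻¹ *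
      (t ^ k * s * r ^ (-k) * s⁻¹) = 1 := by
  have e1 : s * r ^ (-k) * s⁻¹ = r⁻¹ * s ^ (-k) * r := braid_conj_zpow hsr (-k)
  have e2 : r * t ^ k * r⁻¹ = t⁻¹ * r ^ k * t := braid_conj_zpow htr.symm k
  have e3 : t * s ^ (-k) * t⁻¹ = s⁻¹ * t ^ (-k) * s := braid_conj_zpow hst.symm (-k)
  have main : (s * t * r) * (t ^ k * s * r ^ (-k) * s⁻¹) * (s * t * r)⁻¹ =
      (t ^ k * s * r ^ (-k) * s⁻¹)⁻¹ := by
    calc (s * t * r) * (t ^ k * s * r ^ (-k) * s⁻¹) * (s * t * r)⁻¹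
        = s * t * r * t ^ k * (s * r ^ (-k) * s⁻¹) * r⁻¹ * t⁻¹ * s⁻¹ := by group
      _ = s * t * r * t ^ k * (r⁻¹ * s ^ (-k) * r) * r⁻¹ * t⁻¹ * s⁻¹ := by rw [e1]
      _ = s * t * (r * t ^ k * r⁻¹) * s ^ (-k) * t⁻¹ * s⁻¹ := by group
      _ = s * t * (t⁻¹ * r ^ k * t) * s ^ (-k) * t⁻¹ * s⁻¹ := by rw [e2]
      _ = s * r ^ k * (t * s ^ (-k) * t⁻¹) * s⁻¹ := by group
      _ = s * r ^ k * (s⁻¹ * t ^ (-k) * s) * s⁻¹ := by rw [e3]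
      _ = (t ^ k * s * r ^ (-k) * s⁻¹)⁻¹ := by group
  rw [main, inv_mul_cancel]

end A333KB
namespace A333KB

open A333

/-! #### Homomorphisms out of the Artin group -/

/-- Abelianization-style homomorphism sending every generator to `1 : ℤ`. -/
def phi1 : A333.Grp →* Multiplicative ℤ :=
  PresentedGroup.toGroup (f := fun _ => Multiplicative.ofAdd (1:ℤ)) (by
    intro w hw
    simp only [A333.rels, Set.mem_insert_iff, Set.mem_singleton_iff] at hw
    rcases hw with rfl | rfl | rfl <;>
      simp only [map_mul, map_inv, FreeGroup.lift_apply_of] <;> group)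

lemma phi1_s : phi1 s = Multiplicative.ofAdd (1:ℤ) := by unfold phi1 A333.s; exact PresentedGroup.toGroup.of _
lemma phi1_t : phi1 t = Multiplicative.ofAdd (1:ℤ) := by unfold phi1 A333.t; exact PresentedGroup.toGroup.of _
lemma phi1_r : phi1 r = Multiplicative.ofAdd (1:ℤ) := by unfold phi1 A333.r; exact PresentedGroup.toGroup.of _

lemma ofAdd_one_zpow (z : ℤ) : Multiplicative.ofAdd (1:ℤ) ^ z = Multiplicative.ofAdd z := by
  rw [← ofAdd_zsmul]; norm_num

/-- Homomorphism to `SL(2,ℤ)` sending `s, r ↦ Sm 1` and `t ↦ Tm 1`. -/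
def phi2 : A333.Grp →* SL2 :=
  PresentedGroup.toGroup (f := fun i => ![Sm 1, Tm 1, Sm 1] i) (by
    intro w hw
    simp only [A333.rels, Set.mem_insert_iff, Set.mem_singleton_iff] at hw
    rcases hw with rfl | rfl | rfl <;>
      simp only [map_mul, map_inv, FreeGroup.lift_apply_of] <;>
      rw [mul_inv_eq_one]
    · exact braidST
    · exact braidST.symm
    · rfl)

lemma phi2_s : phi2 s = Sm 1 := by unfold phi2 A333.s; exact PresentedGroup.toGroup.of _
lemma phi2_t : phi2 t = Tm 1 := by unfold phi2 A333.t; exact PresentedGroup.toGroup.of _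
lemma phi2_r : phi2 r = Sm 1 := by unfold phi2 A333.r; exact PresentedGroup.toGroup.of _

end A333KB
namespace A333KB

open A333

/-! #### The Klein bottle group: normal form -/

def A : KleinBottleGroup := PresentedGroup.of false
def B : KleinBottleGroup := PresentedGroup.of true

lemma relK : A * B * A⁻¹ * B = 1 := by
  have h := mk_rel_eq_one
    (rels := ({FreeGroup.of false * FreeGroup.of true *
      (FreeGroup.of false)⁻¹ * FreeGroup.of true} : Set (FreeGroup Bool))) rfl
  simp only [map_mul, map_inv] at h
  exact h

lemma hA1 : A * B * A⁻¹ = B⁻¹ := mul_eq_one_iff_eq_inv.mp relK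

lemma hA2 : A * B⁻¹ * A⁻¹ = B := by
  calc A * B⁻¹ * A⁻¹ = (A * B * A⁻¹)⁻¹ := by group
    _ = (B⁻¹)⁻¹ := by rw [hA1]
    _ = B := inv_inv B

lemma hA3 : A⁻¹ * B * A = B⁻¹ := by
  calc A⁻¹ * B * A = A⁻¹ * (A * B⁻¹ * A⁻¹) * A := by rw [hA2]
    _ = B⁻¹ := by group

lemma hA4 : A⁻¹ * B⁻¹ * A = B := by
  calc A⁻¹ * B⁻¹ * A = A⁻¹ * (A * B * A⁻¹) * A := by rw [hA1]
    _ = B := by group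

lemma conj_cases (m : ℤ) : A ^ m * B * A ^ (-m) = B ∨ A ^ m * B * A ^ (-m) = B⁻¹ := by
  induction m using Int.induction_on with
  | zero => left; simp
  | succ n ih =>
    have h : A ^ ((n:ℤ)+1) * B * A ^ (-((n:ℤ)+1)) =
        A * (A ^ (n:ℤ) * B * A ^ (-(n:ℤ))) * A⁻¹ := by group
    rcases ih with h' | h'
    · right; rw [h, h', hA1]
    · left; rw [h, h', hA2]
  | pred n ih =>
    have h : A ^ (-(n:ℤ)-1) * B * A ^ (-(-(n:ℤ)-1)) =
        A⁻¹ * (A ^ (-(n:ℤ)) * B * A ^ (-(-(n:ℤ)))) * A := by group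
    rcases ih with h' | h'
    · right; rw [h, h', hA3]
    · left; rw [h, h', hA4]

lemma conj_zpow_cases (m p : ℤ) :
    A ^ m * B ^ p * A ^ (-m) = B ^ p ∨ A ^ m * B ^ p * A ^ (-m) = B ^ (-p) := by
  have e : A ^ m * B ^ p * A ^ (-m) = (A ^ m * B * A ^ (-m)) ^ p := by
    rw [zpow_neg]; exact conj_zpow.symm
  rcases conj_cases m with h | h
  · left; rw [e, h]
  · right; rw [e, h, inv_zpow, ← zpow_neg]

lemma normal_form (g : KleinBottleGroup) : ∃ n m : ℤ, g = B ^ n * A ^ m := by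
  refine PresentedGroup.induction_on (C := fun g => ∃ n m : ℤ, g = B ^ n * A ^ m) g ?_
  intro z
  induction z using FreeGroup.induction_on with
  | C1 => exact ⟨0, 0, by simp⟩
  | of x =>
    cases x
    · exact ⟨0, 1, by simp [A]; rfl⟩
    · exact ⟨1, 0, by simp [B]; rfl⟩
  | inv_of x _ =>
    cases x
    · exact ⟨0, -1, by simp [A]; rfl⟩
    · exact ⟨-1, 0, by simp [B]; rfl⟩
  | mul z w ihz ihw =>
    obtain ⟨n, m, hz⟩ := ihz
    obtain ⟨p, q, hw⟩ := ihw
    rw [map_mul, hz, hw]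
    rcases conj_zpow_cases m p with h | h
    · refine ⟨n + p, m + q, ?_⟩
      calc B ^ n * A ^ m * (B ^ p * A ^ q)
          = B ^ n * (A ^ m * B ^ p * A ^ (-m)) * A ^ (m + q) := by group
        _ = B ^ n * B ^ p * A ^ (m + q) := by rw [h]
        _ = B ^ (n + p) * A ^ (m + q) := by group
    · refine ⟨n - p, m + q, ?_⟩
      calc B ^ n * A ^ m * (B ^ p * A ^ q)
          = B ^ n * (A ^ m * B ^ p * A ^ (-m)) * A ^ (m + q) := by group
        _ = B ^ n * B ^ (-p) * A ^ (m + q) := by rw [h]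
        _ = B ^ (n - p) * A ^ (m + q) := by group

/-! #### The homomorphism from the Klein bottle group into the Artin group -/

/-- The homomorphism `⟨a,b | aba⁻¹ = b⁻¹⟩ → A(3,3,3)` sending `a ↦ str`,
`b ↦ tᵏ s r⁻ᵏ s⁻¹`. -/
def alpha (k : ℤ) : KleinBottleGroup →* A333.Grp :=
  PresentedGroup.toGroup
    (f := fun i => if i then t ^ k * s * r ^ (-k) * s⁻¹ else s * t * r) (by
    intro w hw
    simp only [Set.mem_singleton_iff] at hw
    subst hw
    simp only [map_mul, map_inv, FreeGroup.lift_apply_of, if_true, if_false]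
    exact key_rel k)

lemma alpha_A (k : ℤ) : alpha k A = s * t * r := by
  unfold alpha A; exact PresentedGroup.toGroup.of _

lemma alpha_B (k : ℤ) : alpha k B = t ^ k * s * r ^ (-k) * s⁻¹ := by
  unfold alpha B; exact PresentedGroup.toGroup.of _

/-! #### Injectivity -/

lemma phi1_x : phi1 (s * t * r) = Multiplicative.ofAdd (3:ℤ) := by
  rw [map_mul, map_mul, phi1_s, phi1_t, phi1_r, ← ofAdd_add, ← ofAdd_add]
  norm_num

lemma phi1_y (k : ℤ) : phi1 (t ^ k * s * r ^ (-k) * s⁻¹) = 1 := by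
  rw [map_mul, map_mul, map_mul, map_zpow, map_zpow, map_inv, phi1_s, phi1_t, phi1_r,
    ofAdd_one_zpow, ofAdd_one_zpow, ← ofAdd_neg, ← ofAdd_add, ← ofAdd_add, ← ofAdd_add]
  rw [ofAdd_eq_one]
  ring_nf

lemma phi2_y (k : ℤ) : phi2 (t ^ k * s * r ^ (-k) * s⁻¹) = Tm k * Sm (-k) := by
  rw [map_mul, map_mul, map_mul, map_zpow, map_zpow, map_inv, phi2_s, phi2_t, phi2_r,
    Sm_zpow, Tm_zpow, Sm_inv, mul_assoc, mul_assoc, Sm_mul, Sm_mul]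
  congr 1
  ring_nf

lemma alpha_injective (k : ℤ) (hk : k ≠ 0) : Function.Injective (alpha k) := by
  rw [injective_iff_map_eq_one]
  intro g hg
  obtain ⟨n, m, rfl⟩ := normal_form g
  rw [map_mul, map_zpow, map_zpow, alpha_A, alpha_B] at hg
  -- first: the exponent of `x` is zero
  have hm : m = 0 := by
    have h1 := congrArg phi1 hg
    rw [map_mul, map_zpow, map_zpow, map_one, phi1_x, phi1_y, one_zpow, one_mul,
      ← ofAdd_zsmul] at h1
    have h1' := ofAdd_eq_one.mp h1
    simp only [smul_eq_mul] at h1'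
    omega
  subst hm
  rw [zpow_zero, mul_one] at hg
  -- then: the exponent of `y` is zero
  have hn : n = 0 := by
    have h2 := congrArg phi2 hg
    rw [map_zpow, map_one, phi2_y] at h2
    exact TS_zpow_eq_one k hk n h2
  subst hn
  simp

/-! #### Assembling the isomorphism -/

lemma alpha_range (k : ℤ) :
    (alpha k).range = Subgroup.closure {s * t * r, t ^ k * s * r ^ (-k) * s⁻¹} := by
  apply le_antisymm
  · rintro _ ⟨g, rfl⟩
    obtain ⟨n, m, rfl⟩ := normal_form g
    rw [map_mul, map_zpow, map_zpow, alpha_A, alpha_B]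
    exact mul_mem
      (zpow_mem (Subgroup.subset_closure (by simp)) n)
      (zpow_mem (Subgroup.subset_closure (by simp)) m)
  · rw [Subgroup.closure_le]
    rintro g hg
    rcases hg with rfl | rfl
    · exact ⟨A, alpha_A k⟩
    · exact ⟨B, alpha_B k⟩

end A333KB

open A333 in
/-- In `A(3,3,3)`, for every nonzero integer `k`, the subgroup generated by `str` and
`t^k s r^{-k} s⁻¹` is isomorphic to the fundamental group of the Klein bottle. -/
theorem A333_klein_bottle_subgroup (k : ℤ) (hk : k ≠ 0) :
    Nonempty ((Subgroup.closure {s * t * r, t ^ k * s * r ^ (-k) * s⁻¹} : Subgroup A333.Grp)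
      ≃* KleinBottleGroup) := by
  exact ⟨((MonoidHom.ofInjective (A333KB.alpha_injective k hk)).trans
    (MulEquiv.subgroupCongr (A333KB.alpha_range k))).symm⟩
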